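/- arXiv:2506.08150 — 4 statements merged into one kernel-verified Lean document; each statement's English description precedes it below -/
import Mathlib

section
/- Completeness of the constraint translation: if M = (⟨T,T⟩, τ) is a metric equilibrium model of a metric logic program P of length λ, then θ^c(M) is a constraint equilibrium model of Π_λ(P) ∪ Δ^c_λ ∪ Ψ^c_λ(P). -/
/-! ### Propositional Here-and-There -/

inductive HTForm (α : Type) : Type
  | bot : HTForm α
  | atom : α → HTForm α
  | and : HTForm α → HTForm α → HTForm α
  | or : HTForm α → HTForm α → HTForm α
  | imp : HTForm α → HTForm α → HTForm α

/-- HT satisfaction `⟨H,T⟩ ⊨ φ`. -/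
def HTSat {α : Type} : Set α → Set α → HTForm α → Prop
  | _, _, .bot => False
  | H, _, .atom a => a ∈ H
  | H, T, .and φ ψ => HTSat H T φ ∧ HTSat H T ψ
  | H, T, .or φ ψ => HTSat H T φ ∨ HTSat H T ψ
  | H, T, .imp φ ψ => (HTSat H T φ → HTSat H T ψ) ∧ (HTSat T T φ → HTSat T T ψ)

/-- Classical satisfaction. -/
def ClSat {α : Type} : Set α → HTForm α → Prop
  | _, .bot => False
  | T, .atom a => a ∈ T
  | T, .and φ ψ => ClSat T φ ∧ ClSat T ψ
  | T, .or φ ψ => ClSat T φ ∨ ClSat T ψ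
  | T, .imp φ ψ => ClSat T φ → ClSat T ψ

def HTModel {α : Type} (H T : Set α) (Γ : Set (HTForm α)) : Prop :=
  ∀ φ ∈ Γ, HTSat H T φ

/-- Equilibrium model: total HT-model minimal in the here-component. -/
def EqModel {α : Type} (T : Set α) (Γ : Set (HTForm α)) : Prop :=
  HTModel T T Γ ∧ ∀ H : Set α, H ⊆ T → HTModel H T Γ → H = T

def hneg {α : Type} (φ : HTForm α) : HTForm α := .imp φ .bot
def hTop {α : Type} : HTForm α := hneg .bot
def hconj {α : Type} (l : List (HTForm α)) : HTForm α := l.foldr .and hTop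
def hdisj {α : Type} (l : List (HTForm α)) : HTForm α := l.foldr .or .bot

/-! ### Timing functions -/

/-- A (strict) timing function wrt `lam`: `τ 0 = 0` and `τ` strictly increasing on `[0, lam)`. -/
def TimingFn (lam : ℕ) (τ : ℕ → ℕ) : Prop :=
  τ 0 = 0 ∧ ∀ k, k + 1 < lam → τ k < τ (k + 1)

/-! ### Metric formulas and MHT satisfaction -/

inductive MForm (α : Type) : Type
  | bot : MForm α
  | atom : α → MForm α
  | and : MForm α → MForm α → MForm α
  | or : MForm α → MForm α → MForm α
  | imp : MForm α → MForm α → MForm α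
  | init : MForm α
  | next : ℕ → Option ℕ → MForm α → MForm α
  | always : ℕ → Option ℕ → MForm α → MForm α
  | event : ℕ → Option ℕ → MForm α → MForm α

/-- Membership `d ∈ [m, n)` with `n ∈ ℕ ∪ {ω}` (`none` = ω). -/
def inI (m : ℕ) (n : Option ℕ) (d : ℕ) : Prop :=
  m ≤ d ∧ ∀ n', n = some n' → d < n'

/-- MHT satisfaction over a timed HT-trace of length `lam` given by `H T : ℕ → Set α` and `τ`. -/
def MSat {α : Type} (lam : ℕ) : (ℕ → Set α) → (ℕ → Set α) → (ℕ → ℕ) → ℕ → MForm α → Prop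
  | _, _, _, _, .bot => False
  | H, _, _, k, .atom a => a ∈ H k
  | H, T, τ, k, .and φ ψ => MSat lam H T τ k φ ∧ MSat lam H T τ k ψ
  | H, T, τ, k, .or φ ψ => MSat lam H T τ k φ ∨ MSat lam H T τ k ψ
  | H, T, τ, k, .imp φ ψ =>
      (MSat lam H T τ k φ → MSat lam H T τ k ψ) ∧
      (MSat lam T T τ k φ → MSat lam T T τ k ψ)
  | _, _, _, k, .init => k = 0
  | H, T, τ, k, .next m n φ =>
      k + 1 < lam ∧ MSat lam H T τ (k + 1) φ ∧ inI m n (τ (k + 1) - τ k)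
  | H, T, τ, k, .event m n φ =>
      ∃ i, k ≤ i ∧ i < lam ∧ inI m n (τ i - τ k) ∧ MSat lam H T τ i φ
  | H, T, τ, k, .always m n φ =>
      ∀ i, k ≤ i → i < lam → inI m n (τ i - τ k) → MSat lam H T τ i φ

def mneg {α : Type} (φ : MForm α) : MForm α := .imp φ .bot
def mTop {α : Type} : MForm α := mneg .bot
def mconj {α : Type} (l : List (MForm α)) : MForm α := l.foldr .and mTop
def mdisj {α : Type} (l : List (MForm α)) : MForm α := l.foldr .or .bot

/-! ### The Boolean timing program Δ_{λ,ν} -/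

/-- `bigOr`/`deltaRule`/`DeltaB` over atoms embedded via `f : ℕ × ℕ → β`
(`f (k,d)` plays the role of the atom `t_{k,d}`). -/
def deltaRule {β : Type} (f : ℕ × ℕ → β) (k d ν : ℕ) : HTForm β :=
  .imp (.atom (f (k, d)))
    (hdisj (((List.range (ν + 1)).filter (fun d' => decide (d < d'))).map
      (fun d' => .atom (f (k + 1, d')))))

def DeltaB {β : Type} (f : ℕ × ℕ → β) (lam ν : ℕ) : Set (HTForm β) :=
  {HTForm.atom (f (0, 0))} ∪
  {r | ∃ k d, k + 1 < lam ∧ d ≤ ν ∧ r = deltaRule f k d ν}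

/-- `⟨H,T⟩` is timed wrt `lam` with timing function `τ`:
`t_{k,d} ∈ H ↔ τ k = d` and `t_{k,d} ∈ T ↔ τ k = d` for all `k < lam`. -/
def TimedHT {β : Type} (f : ℕ × ℕ → β) (lam : ℕ) (H T : Set β) (τ : ℕ → ℕ) : Prop :=
  TimingFn lam τ ∧
  ∀ k, k < lam → ∀ d, ((f (k, d) ∈ H) ↔ τ k = d) ∧ ((f (k, d) ∈ T) ↔ τ k = d)

/-! ### HT_c with difference constraints (simple signature) -/

abbrev CVal (V : Type) := V → Option ℕ

def CValLe {V : Type} (h t : CVal V) : Prop := ∀ x d, h x = some d → t x = some d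

inductive CForm (V : Type) : Type
  | bot : CForm V
  | eqC : V → ℕ → CForm V
  | diff : V → V → ℤ → CForm V
  | and : CForm V → CForm V → CForm V
  | or : CForm V → CForm V → CForm V
  | imp : CForm V → CForm V → CForm V

def CSat {V : Type} : CVal V → CVal V → CForm V → Prop
  | _, _, .bot => False
  | h, _, .eqC x d => h x = some d
  | h, _, .diff x y d => ∃ a b : ℕ, h x = some a ∧ h y = some b ∧ (a : ℤ) - b ≤ d
  | h, t, .and φ ψ => CSat h t φ ∧ CSat h t ψ
  | h, t, .or φ ψ => CSat h t φ ∨ CSat h t ψ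
  | h, t, .imp φ ψ => (CSat h t φ → CSat h t ψ) ∧ (CSat t t φ → CSat t t ψ)

def CModel {V : Type} (h t : CVal V) (Γ : Set (CForm V)) : Prop := ∀ φ ∈ Γ, CSat h t φ

/-- Δ^c_λ over integer variables `t_0, …, t_{λ-1}` (variables are indices in ℕ). -/
def DeltaC (lam : ℕ) : Set (CForm ℕ) :=
  {CForm.eqC 0 0} ∪ {r | ∃ k, k + 1 < lam ∧ r = CForm.diff k (k + 1) (-1)}

/-- `⟨h,t⟩` is timed wrt `lam`. -/
def TimedC (lam : ℕ) (h t : CVal ℕ) : Prop :=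
  ∃ τ : ℕ → ℕ, TimingFn lam τ ∧ ∀ k, k < lam → h k = some (τ k) ∧ t k = some (τ k)

/-! ### Timed traces and the bijection θ/σ -/

abbrev TAtom (α : Type) := (α × ℕ) ⊕ (ℕ × ℕ)

/-- A trace candidate: here-states, there-states and a timing function. -/
abbrev TraceC (α : Type) := (ℕ → Set α) × (ℕ → Set α) × (ℕ → ℕ)

/-- Timed HT-trace of length `lam` (normalized beyond `lam`). -/
def IsTTrace {α : Type} (lam : ℕ) (M : TraceC α) : Prop :=
  (∀ k, M.1 k ⊆ M.2.1 k) ∧ TimingFn lam M.2.2 ∧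
  (∀ k, lam ≤ k → M.1 k = ∅ ∧ M.2.1 k = ∅ ∧ M.2.2 k = 0)

def thetaMap {α : Type} (lam : ℕ) (M : TraceC α) : Set (TAtom α) × Set (TAtom α) :=
  ({x | (∃ a k, k < lam ∧ a ∈ M.1 k ∧ x = Sum.inl (a, k)) ∨
        (∃ k, k < lam ∧ x = Sum.inr (k, M.2.2 k))},
   {x | (∃ a k, k < lam ∧ a ∈ M.2.1 k ∧ x = Sum.inl (a, k)) ∨
        (∃ k, k < lam ∧ x = Sum.inr (k, M.2.2 k))})

/-- HT-interpretations over `A* ∪ T` timed wrt `lam`. -/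
def TimedInterp (α : Type) (lam : ℕ) : Set (Set (TAtom α) × Set (TAtom α)) :=
  {p | p.1 ⊆ p.2 ∧ (∀ a k, Sum.inl (a, k) ∈ p.2 → k < lam) ∧
    ∃ τ : ℕ → ℕ, TimingFn lam τ ∧
      ∀ k d, (Sum.inr (k, d) ∈ p.1 ↔ (k < lam ∧ τ k = d)) ∧
             (Sum.inr (k, d) ∈ p.2 ↔ (k < lam ∧ τ k = d))}

def sigmaMap {α : Type} (lam : ℕ) (p : Set (TAtom α) × Set (TAtom α)) (τ : ℕ → ℕ) :
    TraceC α :=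
  (fun k => {a | Sum.inl (a, k) ∈ p.1},
   fun k => {a | Sum.inl (a, k) ∈ p.2},
   fun k => if k < lam then τ k else 0)

/-! ### Metric logic programs and the translation Π_λ -/

inductive BAtom (α : Type) : Type
  | atom : α → BAtom α
  | initB : BAtom α
  | finB : BAtom α

/-- A metric rule: either `□(α ← β)` or `□(○_[m,n) a ← β)`. -/
inductive MRule (α : Type) : Type
  | std : List α → List α → List (BAtom α) → List (BAtom α) → MRule α
  | nxt : ℕ → Option ℕ → α → List (BAtom α) → List (BAtom α) → MRule α

def bToM {α : Type} : BAtom α → MForm α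
  | .atom a => .atom a
  | .initB => .init
  | .finB => mneg (.next 0 none mTop)

/-- The rule body as a metric formula. -/
def MRule.mbody {α : Type} : MRule α → MForm α
  | .std _ _ bp bn =>
      .and (mconj (bp.map bToM)) (mconj (bn.map (fun b => mneg (bToM b))))
  | .nxt _ _ _ bp bn =>
      .and (mconj (bp.map bToM)) (mconj (bn.map (fun b => mneg (bToM b))))

/-- The rule (without the leading `□`) as a metric formula. -/
def MRule.toMForm {α : Type} : MRule α → MForm α
  | .std hp hn bp bn =>
      .imp (MRule.mbody (.std hp hn bp bn))
        (mdisj (hp.map MForm.atom ++ hn.map (fun a => mneg (MForm.atom a))))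
  | .nxt m n a bp bn =>
      .imp (MRule.mbody (.nxt m n a bp bn)) (.next m n (.atom a))

/-- `(H,T,τ)` is an MHT-model (of length `lam`) of program `P`. -/
def MHTModelP {α : Type} (lam : ℕ) (H T : ℕ → Set α) (τ : ℕ → ℕ)
    (P : Set (MRule α)) : Prop :=
  ∀ r ∈ P, ∀ k, k < lam → MSat lam H T τ k r.toMForm

/-- Metric equilibrium model `(⟨T,T⟩, τ)` of `P`. -/
def MetricEq {α : Type} (lam : ℕ) (T : ℕ → Set α) (τ : ℕ → ℕ)
    (P : Set (MRule α)) : Prop :=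
  MHTModelP lam T T τ P ∧
  ∀ H : ℕ → Set α, (∀ k, H k ⊆ T k) → MHTModelP lam H T τ P → ∀ k, k < lam → H k = T k

/-- Translation of body atoms at step `k`, with atoms embedded via `g : α × ℕ → β`. -/
def trB {α β : Type} (g : α × ℕ → β) (lam k : ℕ) : BAtom α → HTForm β
  | .atom a => .atom (g (a, k))
  | .initB => if k = 0 then hTop else .bot
  | .finB => if k = lam - 1 then hTop else .bot

def trBody {α β : Type} (g : α × ℕ → β) (lam k : ℕ) : MRule α → HTForm β
  | .std _ _ bp bn =>
      .and (hconj (bp.map (trB g lam k)))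
           (hconj (bn.map (fun b => hneg (trB g lam k b))))
  | .nxt _ _ _ bp bn =>
      .and (hconj (bp.map (trB g lam k)))
           (hconj (bn.map (fun b => hneg (trB g lam k b))))

/-- Translation `t_k(r)` of a metric rule at step `k`. -/
def trRule {α β : Type} (g : α × ℕ → β) (lam k : ℕ) : MRule α → HTForm β
  | .std hp hn bp bn =>
      .imp (trBody g lam k (.std hp hn bp bn))
        (hdisj (hp.map (fun a => HTForm.atom (g (a, k))) ++
                hn.map (fun a => hneg (HTForm.atom (g (a, k))))))
  | .nxt m n a bp bn =>
      .imp (trBody g lam k (.nxt m n a bp bn))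
        (if k = lam - 1 then .bot else .atom (g (a, k + 1)))

/-- `Π_λ(P)`. -/
def PiT {α β : Type} (g : α × ℕ → β) (lam : ℕ) (P : Set (MRule α)) : Set (HTForm β) :=
  {φ | ∃ r ∈ P, ∃ k, k < lam ∧ φ = trRule g lam k r}

/-! ### The Boolean constraint part Ψ_{λ,ν}(P) -/

def PsiB {α : Type} (lam ν : ℕ) (P : Set (MRule α)) : Set (HTForm (TAtom α)) :=
  {φ | ∃ m n a bp bn, MRule.nxt m n a bp bn ∈ P ∧
    ∃ k d d', k + 1 < lam ∧ d < d' ∧ d' ≤ ν ∧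
      φ = .imp (.and (trBody Sum.inl lam k (.nxt m n a bp bn))
                 (.and (.atom (Sum.inr (k, d))) (.atom (Sum.inr (k + 1, d'))))) .bot ∧
      (d' - d < m ∨ ∃ n', n = some n' ∧ n' ≤ d' - d)}

/-- θ on total timed traces, producing one set over `A* ∪ T`. -/
def thetaTot {α : Type} (lam : ℕ) (T : ℕ → Set α) (τ : ℕ → ℕ) : Set (TAtom α) :=
  {x | (∃ a k, k < lam ∧ a ∈ T k ∧ x = Sum.inl (a, k)) ∨
       (∃ k, k < lam ∧ x = Sum.inr (k, τ k))}

/-! ### HT_c over the mixed signature (Boolean atoms + integer timing variables) -/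

inductive CForm2 (α : Type) : Type
  | bot : CForm2 α
  | batom : α × ℕ → CForm2 α
  | eqC : ℕ → ℕ → CForm2 α
  | diff : ℕ → ℕ → ℤ → CForm2 α
  | and : CForm2 α → CForm2 α → CForm2 α
  | or : CForm2 α → CForm2 α → CForm2 α
  | imp : CForm2 α → CForm2 α → CForm2 α

/-- A valuation: Boolean part (atoms assigned `true`) and integer part. -/
abbrev CVal2 (α : Type) := Set (α × ℕ) × (ℕ → Option ℕ)

def CVal2Le {α : Type} (h t : CVal2 α) : Prop :=
  h.1 ⊆ t.1 ∧ ∀ x d, h.2 x = some d → t.2 x = some d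

def CSat2 {α : Type} : CVal2 α → CVal2 α → CForm2 α → Prop
  | _, _, .bot => False
  | h, _, .batom p => p ∈ h.1
  | h, _, .eqC x d => h.2 x = some d
  | h, _, .diff x y d => ∃ a b : ℕ, h.2 x = some a ∧ h.2 y = some b ∧ (a : ℤ) - b ≤ d
  | h, t, .and φ ψ => CSat2 h t φ ∧ CSat2 h t ψ
  | h, t, .or φ ψ => CSat2 h t φ ∨ CSat2 h t ψ
  | h, t, .imp φ ψ => (CSat2 h t φ → CSat2 h t ψ) ∧ (CSat2 t t φ → CSat2 t t ψ)

def CModel2 {α : Type} (h t : CVal2 α) (Γ : Set (CForm2 α)) : Prop :=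
  ∀ φ ∈ Γ, CSat2 h t φ

/-- Constraint equilibrium model. -/
def CEqModel {α : Type} (t : CVal2 α) (Γ : Set (CForm2 α)) : Prop :=
  CModel2 t t Γ ∧ ∀ h : CVal2 α, CVal2Le h t → CModel2 h t Γ → h = t

def cneg {α : Type} (φ : CForm2 α) : CForm2 α := .imp φ .bot

/-- Conversion of Boolean HT formulas over `α × ℕ` into mixed constraint formulas. -/
def toC2 {α : Type} : HTForm (α × ℕ) → CForm2 α
  | .bot => .bot
  | .atom p => .batom p
  | .and φ ψ => .and (toC2 φ) (toC2 ψ)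
  | .or φ ψ => .or (toC2 φ) (toC2 ψ)
  | .imp φ ψ => .imp (toC2 φ) (toC2 ψ)

def PiC {α : Type} (lam : ℕ) (P : Set (MRule α)) : Set (CForm2 α) :=
  toC2 '' PiT id lam P

def DeltaC2 {α : Type} (lam : ℕ) : Set (CForm2 α) :=
  {CForm2.eqC 0 0} ∪ {r | ∃ k, k + 1 < lam ∧ r = CForm2.diff k (k + 1) (-1)}

def PsiC {α : Type} (lam : ℕ) (P : Set (MRule α)) : Set (CForm2 α) :=
  {φ | ∃ m n a bp bn, MRule.nxt m n a bp bn ∈ P ∧ ∃ k, k + 1 < lam ∧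
    (φ = .imp (.and (toC2 (trBody id lam k (.nxt m n a bp bn)))
               (cneg (.diff k (k + 1) (-(m : ℤ))))) .bot ∨
     ∃ n', n = some n' ∧
       φ = .imp (.and (toC2 (trBody id lam k (.nxt m n a bp bn)))
                 (cneg (.diff (k + 1) k ((n' : ℤ) - 1)))) .bot)}

/-- θ^c on total timed traces. -/
def thetaC {α : Type} (lam : ℕ) (T : ℕ → Set α) (τ : ℕ → ℕ) : CVal2 α :=
  ({p | p.2 < lam ∧ p.1 ∈ T p.2}, fun k => if k < lam then some (τ k) else none)

/-! ### Auxiliary lemmas -/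

section Aux

lemma HTSat_persist {β : Type} {h t : Set β} (hsub : h ⊆ t) :
    ∀ φ : HTForm β, HTSat h t φ → HTSat t t φ := by
  intro φ
  induction φ with
  | bot => exact id
  | atom a => exact fun ha => hsub ha
  | and φ ψ ihφ ihψ => exact fun p => ⟨ihφ p.1, ihψ p.2⟩
  | or φ ψ ihφ ihψ => rintro (a | b); exacts [Or.inl (ihφ a), Or.inr (ihψ b)]
  | imp φ ψ _ _ => exact fun p => ⟨p.2, p.2⟩

lemma HTSat_hconj {β : Type} (h t : Set β) (l : List (HTForm β)) :
    HTSat h t (hconj l) ↔ ∀ φ ∈ l, HTSat h t φ := by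
  induction l with
  | nil => simp [hconj, hTop, hneg, HTSat]
  | cons a l ih =>
    have e : HTSat h t (hconj (a :: l)) ↔ HTSat h t a ∧ HTSat h t (hconj l) := Iff.rfl
    rw [e, ih]; simp

lemma HTSat_hdisj {β : Type} (h t : Set β) (l : List (HTForm β)) :
    HTSat h t (hdisj l) ↔ ∃ φ ∈ l, HTSat h t φ := by
  induction l with
  | nil => simp [hdisj]; exact fun h => h
  | cons a l ih =>
    have e : HTSat h t (hdisj (a :: l)) ↔ HTSat h t a ∨ HTSat h t (hdisj l) := Iff.rfl
    rw [e, ih]; simp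

lemma MSat_mconj {β : Type} (lam : ℕ) (H T : ℕ → Set β) (τ : ℕ → ℕ) (k : ℕ)
    (l : List (MForm β)) :
    MSat lam H T τ k (mconj l) ↔ ∀ φ ∈ l, MSat lam H T τ k φ := by
  induction l with
  | nil => simp [mconj, mTop, mneg, MSat]
  | cons a l ih =>
    have e : MSat lam H T τ k (mconj (a :: l)) ↔
        MSat lam H T τ k a ∧ MSat lam H T τ k (mconj l) := Iff.rfl
    rw [e, ih]; simp

lemma MSat_mdisj {β : Type} (lam : ℕ) (H T : ℕ → Set β) (τ : ℕ → ℕ) (k : ℕ)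
    (l : List (MForm β)) :
    MSat lam H T τ k (mdisj l) ↔ ∃ φ ∈ l, MSat lam H T τ k φ := by
  induction l with
  | nil => simp [mdisj]; exact fun h => h
  | cons a l ih =>
    have e : MSat lam H T τ k (mdisj (a :: l)) ↔
        MSat lam H T τ k a ∨ MSat lam H T τ k (mdisj l) := Iff.rfl
    rw [e, ih]; simp

lemma toC2_sat {α : Type} (h t : CVal2 α) (φ : HTForm (α × ℕ)) :
    CSat2 h t (toC2 φ) ↔ HTSat h.1 t.1 φ := by
  induction φ generalizing h t with
  | bot => exact Iff.rfl
  | atom p => exact Iff.rfl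
  | and φ ψ ihφ ihψ => exact and_congr (ihφ h t) (ihψ h t)
  | or φ ψ ihφ ihψ => exact or_congr (ihφ h t) (ihψ h t)
  | imp φ ψ ihφ ihψ =>
    exact and_congr (imp_congr (ihφ h t) (ihψ h t)) (imp_congr (ihφ t t) (ihψ t t))

lemma trB_equiv {α : Type} (lam : ℕ) (h1 t1 : Set (α × ℕ)) (H T : ℕ → Set α)
    (τ : ℕ → ℕ)
    (Rh : ∀ k, k < lam → ∀ a, ((a, k) ∈ h1) ↔ a ∈ H k)
    (k : ℕ) (hk : k < lam) (b : BAtom α) :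
    HTSat h1 t1 (trB id lam k b) ↔ MSat lam H T τ k (bToM b) := by
  cases b with
  | atom a => simpa [trB, bToM, HTSat, MSat] using Rh k hk a
  | initB =>
    by_cases h0 : k = 0 <;>
      simp [trB, bToM, HTSat, MSat, h0, hTop, hneg]
  | finB =>
    by_cases hf : k = lam - 1 <;>
      simp [trB, bToM, HTSat, MSat, hf, hTop, hneg, mneg, mTop, inI] <;> omega

lemma trBody_equiv {α : Type} (lam : ℕ) (h1 t1 : Set (α × ℕ)) (H T : ℕ → Set α)
    (τ : ℕ → ℕ)
    (Rh : ∀ k, k < lam → ∀ a, ((a, k) ∈ h1) ↔ a ∈ H k)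
    (Rt : ∀ k, k < lam → ∀ a, ((a, k) ∈ t1) ↔ a ∈ T k)
    (k : ℕ) (hk : k < lam) (r : MRule α) :
    HTSat h1 t1 (trBody id lam k r) ↔ MSat lam H T τ k r.mbody := by
  have hb := trB_equiv lam h1 t1 H T τ Rh k hk
  have hbt := trB_equiv lam t1 t1 T T τ Rt k hk
  have main : ∀ bp bn : List (BAtom α),
      (HTSat h1 t1 (.and (hconj (bp.map (trB id lam k)))
          (hconj (bn.map (fun b => hneg (trB id lam k b))))) ↔
       MSat lam H T τ k (.and (mconj (bp.map bToM))
          (mconj (bn.map (fun b => mneg (bToM b)))))) := by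
    intro bp bn
    have e1 : HTSat h1 t1 (.and (hconj (bp.map (trB id lam k)))
          (hconj (bn.map (fun b => hneg (trB id lam k b))))) ↔
        (∀ φ ∈ bp.map (trB id lam k), HTSat h1 t1 φ) ∧
        (∀ φ ∈ bn.map (fun b => hneg (trB id lam k b)), HTSat h1 t1 φ) := by
      exact and_congr (HTSat_hconj _ _ _) (HTSat_hconj _ _ _)
    have e2 : MSat lam H T τ k (.and (mconj (bp.map bToM))
          (mconj (bn.map (fun b => mneg (bToM b))))) ↔
        (∀ φ ∈ bp.map bToM, MSat lam H T τ k φ) ∧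
        (∀ φ ∈ bn.map (fun b => mneg (bToM b)), MSat lam H T τ k φ) := by
      exact and_congr (MSat_mconj _ _ _ _ _ _) (MSat_mconj _ _ _ _ _ _)
    rw [e1, e2]
    simp only [List.forall_mem_map]
    constructor
    · rintro ⟨p1, p2⟩
      refine ⟨fun b hbm => (hb b).mp (p1 b hbm), fun b hbm => ?_⟩
      have hn := p2 b hbm
      exact ⟨fun g => hn.1 ((hb b).mpr g), fun g => hn.2 ((hbt b).mpr g)⟩
    · rintro ⟨p1, p2⟩
      refine ⟨fun b hbm => (hb b).mpr (p1 b hbm), fun b hbm => ?_⟩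
      have hn := p2 b hbm
      exact ⟨fun g => hn.1 ((hb b).mp g), fun g => hn.2 ((hbt b).mp g)⟩
  cases r with
  | std hp hn bp bn => exact main bp bn
  | nxt m n a bp bn => exact main bp bn

lemma head_std_equiv {α : Type} (lam : ℕ) (h1 t1 : Set (α × ℕ)) (H T : ℕ → Set α)
    (τ : ℕ → ℕ)
    (Rh : ∀ k, k < lam → ∀ a, ((a, k) ∈ h1) ↔ a ∈ H k)
    (Rt : ∀ k, k < lam → ∀ a, ((a, k) ∈ t1) ↔ a ∈ T k)
    (k : ℕ) (hk : k < lam) (hp hn : List α) :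
    HTSat h1 t1 (hdisj (hp.map (fun a => HTForm.atom (id (a, k))) ++
        hn.map (fun a => hneg (HTForm.atom (id (a, k)))))) ↔
      MSat lam H T τ k (mdisj (hp.map MForm.atom ++
        hn.map (fun a => mneg (MForm.atom a)))) := by
  rw [HTSat_hdisj, MSat_mdisj]
  simp only [List.mem_append, List.mem_map, id_eq]
  constructor
  · rintro ⟨φ, (⟨a, ha, rfl⟩ | ⟨a, ha, rfl⟩), hsat⟩
    · exact ⟨_, Or.inl ⟨a, ha, rfl⟩, (Rh k hk a).mp hsat⟩
    · exact ⟨_, Or.inr ⟨a, ha, rfl⟩,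
        fun g => hsat.1 ((Rh k hk a).mpr g), fun g => hsat.2 ((Rt k hk a).mpr g)⟩
  · rintro ⟨φ, (⟨a, ha, rfl⟩ | ⟨a, ha, rfl⟩), hsat⟩
    · exact ⟨_, Or.inl ⟨a, ha, rfl⟩, (Rh k hk a).mpr hsat⟩
    · exact ⟨_, Or.inr ⟨a, ha, rfl⟩,
        fun g => hsat.1 ((Rh k hk a).mp g), fun g => hsat.2 ((Rt k hk a).mp g)⟩

lemma trRule_std_equiv {α : Type} (lam : ℕ) (h1 t1 : Set (α × ℕ)) (H T : ℕ → Set α)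
    (τ : ℕ → ℕ)
    (Rh : ∀ k, k < lam → ∀ a, ((a, k) ∈ h1) ↔ a ∈ H k)
    (Rt : ∀ k, k < lam → ∀ a, ((a, k) ∈ t1) ↔ a ∈ T k)
    (k : ℕ) (hk : k < lam) (hp hn : List α) (bp bn : List (BAtom α)) :
    HTSat h1 t1 (trRule id lam k (.std hp hn bp bn)) ↔
      MSat lam H T τ k (MRule.toMForm (.std hp hn bp bn)) := by
  have hbody := trBody_equiv lam h1 t1 H T τ Rh Rt k hk (.std hp hn bp bn)
  have hbody' := trBody_equiv lam t1 t1 T T τ Rt Rt k hk (.std hp hn bp bn)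
  have hhead := head_std_equiv lam h1 t1 H T τ Rh Rt k hk hp hn
  have hhead' := head_std_equiv lam t1 t1 T T τ Rt Rt k hk hp hn
  constructor
  · rintro ⟨c1, c2⟩
    exact ⟨fun mb => hhead.mp (c1 (hbody.mpr mb)), fun mb => hhead'.mp (c2 (hbody'.mpr mb))⟩
  · rintro ⟨c1, c2⟩
    exact ⟨fun hb => hhead.mpr (c1 (hbody.mp hb)), fun hb => hhead'.mpr (c2 (hbody'.mp hb))⟩

end Aux

/-- Theorem 3 (Completeness of the constraint translation). -/
theorem constraint_translation_complete {α : Type} (lam : ℕ) (hlam : 1 ≤ lam)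
    (P : Set (MRule α)) (T : ℕ → Set α) (τ : ℕ → ℕ)
    (hτ : TimingFn lam τ) (hme : MetricEq lam T τ P) :
    CEqModel (thetaC lam T τ) (PiC lam P ∪ DeltaC2 lam ∪ PsiC lam P) := by
  obtain ⟨hmod, hmin⟩ := hme
  obtain ⟨hτ0, hτmono⟩ := hτ
  set t : CVal2 α := thetaC lam T τ with htdef
  have ht1 : ∀ (a : α) (k : ℕ), ((a, k) ∈ t.1) ↔ (k < lam ∧ a ∈ T k) := by
    intro a k; exact Iff.rfl
  have Rt : ∀ k, k < lam → ∀ a : α, ((a, k) ∈ t.1) ↔ a ∈ T k := by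
    intro k hk a; rw [ht1]; simp [hk]
  have ht2 : ∀ j, j < lam → t.2 j = some (τ j) := by
    intro j hj; simp [htdef, thetaC, hj]
  have tmod : CModel2 t t (PiC lam P ∪ DeltaC2 lam ∪ PsiC lam P) := by
    rintro φ ((hφ | hφ) | hφ)
    · -- PiC
      obtain ⟨ψ, ⟨r, hr, k, hk, rfl⟩, rfl⟩ := hφ
      rw [toC2_sat]
      have msat := hmod r hr k hk
      cases r with
      | std hp hn bp bn =>
        exact (trRule_std_equiv lam t.1 t.1 T T τ Rt Rt k hk hp hn bp bn).mpr msat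
      | nxt m n a bp bn =>
        have key : HTSat t.1 t.1 (trBody id lam k (.nxt m n a bp bn)) →
            HTSat t.1 t.1 (if k = lam - 1 then HTForm.bot else .atom (id (a, k + 1))) := by
          intro hb
          have mb := (trBody_equiv lam t.1 t.1 T T τ Rt Rt k hk _).mp hb
          have hnx := msat.1 mb
          obtain ⟨hk1, ha, hin⟩ := hnx
          have hne : ¬ (k = lam - 1) := by omega
          rw [if_neg hne]
          exact (Rt (k + 1) hk1 a).mpr ha
        exact ⟨key, key⟩
    · -- DeltaC2
      rcases hφ with hφ | ⟨k, hk, rfl⟩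
      · obtain rfl := hφ
        show t.2 0 = some 0
        rw [ht2 0 (by omega), hτ0]
      · show CSat2 t t (.diff k (k + 1) (-1))
        refine ⟨τ k, τ (k + 1), ht2 k (by omega), ht2 (k + 1) hk, ?_⟩
        have := hτmono k hk; omega
    · -- PsiC
      obtain ⟨m, n, a, bp, bn, hr, k, hk1, hform⟩ := hφ
      have hk : k < lam := by omega
      have bodyMSat : CSat2 t t (toC2 (trBody id lam k (.nxt m n a bp bn))) →
          inI m n (τ (k + 1) - τ k) := by
        intro hb
        have mb := (trBody_equiv lam t.1 t.1 T T τ Rt Rt k hk _).mp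
          ((toC2_sat _ _ _).mp hb)
        exact ((hmod _ hr k hk).1 mb).2.2
      have hmono := hτmono k hk1
      rcases hform with rfl | ⟨n', hn, rfl⟩
      · have key : CSat2 t t (.and (toC2 (trBody id lam k (.nxt m n a bp bn)))
            (cneg (.diff k (k + 1) (-(m : ℤ))))) → False := by
          rintro ⟨hb, hc⟩
          have hin := bodyMSat hb
          have h1 := hin.1
          exact hc.1 ⟨τ k, τ (k + 1), ht2 k hk, ht2 (k + 1) hk1, by omega⟩
        exact ⟨key, key⟩
      · have key : CSat2 t t (.and (toC2 (trBody id lam k (.nxt m n a bp bn)))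
            (cneg (.diff (k + 1) k ((n' : ℤ) - 1)))) → False := by
          rintro ⟨hb, hc⟩
          have hin := bodyMSat hb
          have h1 := hin.2 n' hn
          exact hc.1 ⟨τ (k + 1), τ k, ht2 (k + 1) hk1, ht2 k hk, by omega⟩
        exact ⟨key, key⟩
  refine ⟨tmod, ?_⟩
  intro h hle hmodh
  have h2eq : h.2 = t.2 := by
    funext k
    by_cases hk : k < lam
    · have hex : ∃ d, h.2 k = some d := by
        rcases Nat.eq_zero_or_pos k with rfl | hpos
        · exact ⟨0, hmodh (CForm2.eqC 0 0) (Or.inl (Or.inr (Or.inl rfl)))⟩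
        · obtain ⟨j, rfl⟩ : ∃ j, k = j + 1 := ⟨k - 1, by omega⟩
          obtain ⟨x, y, _, hy, _⟩ :=
            hmodh (CForm2.diff j (j + 1) (-1)) (Or.inl (Or.inr (Or.inr ⟨j, hk, rfl⟩)))
          exact ⟨y, hy⟩
      obtain ⟨d, hd⟩ := hex
      have hdt := hle.2 k d hd
      rw [ht2 k hk] at hdt
      rw [hd, ht2 k hk]
      injection hdt with hdt
      rw [hdt]
    · have hnone : t.2 k = none := by simp [htdef, thetaC, hk]
      rw [hnone]
      cases hh : h.2 k with
      | none => rfl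
      | some d =>
        have := hle.2 k d hh
        rw [hnone] at this
        exact absurd this (by simp)
  set H : ℕ → Set α := fun k => {a | (a, k) ∈ h.1} with hHdef
  have Rh : ∀ k, k < lam → ∀ a : α, ((a, k) ∈ h.1) ↔ a ∈ H k := fun _ _ _ => Iff.rfl
  have Hsub : ∀ k, H k ⊆ T k := by
    intro k a ha
    exact ((ht1 a k).mp (hle.1 ha)).2
  have hmht : MHTModelP lam H T τ P := by
    intro r hr k hk
    have hPi : CSat2 h t (toC2 (trRule id lam k r)) :=
      hmodh _ (Or.inl (Or.inl ⟨trRule id lam k r, ⟨r, hr, k, hk, rfl⟩, rfl⟩))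
    have hHT := (toC2_sat h t _).mp hPi
    cases r with
    | std hp hn bp bn =>
      exact (trRule_std_equiv lam h.1 t.1 H T τ Rh Rt k hk hp hn bp bn).mp hHT
    | nxt m n a bp bn =>
      have get_inI : k + 1 < lam →
          HTSat t.1 t.1 (trBody id lam k (.nxt m n a bp bn)) →
          inI m n (τ (k + 1) - τ k) := by
        intro hk1 hbt
        have hCb : CSat2 t t (toC2 (trBody id lam k (.nxt m n a bp bn))) :=
          (toC2_sat t t _).mpr hbt
        have hmono := hτmono k hk1
        have hdlow : m ≤ τ (k + 1) - τ k := by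
          have hlow := (hmodh _ (Or.inr ⟨m, n, a, bp, bn, hr, k, hk1, Or.inl rfl⟩)).2
          by_contra hcon
          apply hlow
          refine ⟨hCb, ?_, ?_⟩ <;>
          · rintro ⟨x, y, hx, hy, hxy⟩
            rw [ht2 k hk] at hx
            rw [ht2 (k + 1) hk1] at hy
            injection hx with hx
            injection hy with hy
            omega
        refine ⟨hdlow, ?_⟩
        intro n' hn
        subst hn
        have hupp := (hmodh _
          (Or.inr ⟨m, some n', a, bp, bn, hr, k, hk1, Or.inr ⟨n', rfl, rfl⟩⟩)).2
        by_contra hcon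
        apply hupp
        refine ⟨hCb, ?_, ?_⟩ <;>
        · rintro ⟨x, y, hx, hy, hxy⟩
          rw [ht2 (k + 1) hk1] at hx
          rw [ht2 k hk] at hy
          injection hx with hx
          injection hy with hy
          omega
      have hHT1 := hHT.1
      have hHT2 := hHT.2
      refine ⟨?_, ?_⟩
      · intro mb
        have hb : HTSat h.1 t.1 (trBody id lam k (.nxt m n a bp bn)) :=
          (trBody_equiv lam h.1 t.1 H T τ Rh Rt k hk _).mpr mb
        have hbt : HTSat t.1 t.1 (trBody id lam k (.nxt m n a bp bn)) :=
          HTSat_persist hle.1 _ hb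
        have hhead := hHT1 hb
        have hk1 : k + 1 < lam := by
          by_contra hcon
          rw [if_pos (by omega)] at hhead
          exact hhead
        rw [if_neg (by omega)] at hhead
        exact ⟨hk1, hhead, get_inI hk1 hbt⟩
      · intro mb
        have hbt : HTSat t.1 t.1 (trBody id lam k (.nxt m n a bp bn)) :=
          (trBody_equiv lam t.1 t.1 T T τ Rt Rt k hk _).mpr mb
        have hhead := hHT2 hbt
        have hk1 : k + 1 < lam := by
          by_contra hcon
          rw [if_pos (by omega)] at hhead
          exact hhead
        rw [if_neg (by omega)] at hhead
        exact ⟨hk1, (Rt (k + 1) hk1 a).mp hhead, get_inI hk1 hbt⟩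
  have hHTeq : ∀ k, k < lam → H k = T k := hmin H Hsub hmht
  have h1eq : h.1 = t.1 := by
    apply Set.Subset.antisymm hle.1
    rintro ⟨a, k⟩ hx
    have hm := (ht1 a k).mp hx
    have ha : a ∈ H k := by rw [hHTeq k hm.1]; exact hm.2
    exact ha
  exact Prod.ext_iff.mpr ⟨h1eq, h2eq⟩
end

section
/- Correctness of the constraint translation: if ⟨t,t⟩ is a constraint equilibrium model of Π_λ(P) ∪ Δ^c_λ ∪ Ψ^c_λ(P), then σ^c(⟨t,t⟩) is a metric equilibrium model of P. -/
/-! ### Auxiliary lemmas for Theorem 4 -/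

section Aux
variable {α : Type}

/-- Here-trace induced by a valuation. -/
def Hof (h : CVal2 α) : ℕ → Set α := fun k => {a | (a, k) ∈ h.1}

/-- Semantics of a body atom at step `k` relative to a state `X`. -/
def BSem (X : Set α) (lam k : ℕ) : BAtom α → Prop
  | .atom a => a ∈ X
  | .initB => k = 0
  | .finB => lam ≤ k + 1

lemma csat_conj (h t : CVal2 α) (l : List (HTForm (α × ℕ))) :
    CSat2 h t (toC2 (hconj l)) ↔ ∀ φ ∈ l, CSat2 h t (toC2 φ) := by
  induction l with
  | nil => simp [hconj, hTop, hneg, toC2, CSat2]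
  | cons x l ih => simp [hconj, toC2, CSat2] at ih ⊢; tauto

lemma csat_disj (h t : CVal2 α) (l : List (HTForm (α × ℕ))) :
    CSat2 h t (toC2 (hdisj l)) ↔ ∃ φ ∈ l, CSat2 h t (toC2 φ) := by
  induction l with
  | nil => simp [hdisj, toC2, CSat2]
  | cons x l ih =>
      show (CSat2 h t (toC2 x) ∨ CSat2 h t (toC2 (hdisj l))) ↔ _
      rw [ih]; simp

lemma msat_conj {lam : ℕ} {H T : ℕ → Set α} {τ : ℕ → ℕ} {k : ℕ} (l : List (MForm α)) :
    MSat lam H T τ k (mconj l) ↔ ∀ φ ∈ l, MSat lam H T τ k φ := by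
  induction l with
  | nil => simp [mconj, mTop, mneg, MSat]
  | cons x l ih => simp [mconj, MSat] at ih ⊢; tauto

lemma msat_disj {lam : ℕ} {H T : ℕ → Set α} {τ : ℕ → ℕ} {k : ℕ} (l : List (MForm α)) :
    MSat lam H T τ k (mdisj l) ↔ ∃ φ ∈ l, MSat lam H T τ k φ := by
  induction l with
  | nil => simp [mdisj, MSat]
  | cons x l ih =>
      show (MSat lam H T τ k x ∨ MSat lam H T τ k (mdisj l)) ↔ _
      rw [ih]; simp

lemma msat_bToM {lam : ℕ} {H T : ℕ → Set α} {τ : ℕ → ℕ} {k : ℕ} (b : BAtom α) :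
    MSat lam H T τ k (bToM b) ↔ BSem (H k) lam k b := by
  cases b <;> simp [bToM, BSem, MSat, mneg, mTop, inI] <;> omega

lemma csat_trB {lam k : ℕ} (hk : k < lam) (h t : CVal2 α) (b : BAtom α) :
    CSat2 h t (toC2 (trB id lam k b)) ↔ BSem (Hof h k) lam k b := by
  cases b with
  | atom a => simp [trB, BSem, Hof, toC2, CSat2]
  | initB =>
      by_cases h0 : k = 0 <;>
        simp [trB, BSem, h0, hTop, hneg, toC2, CSat2]
  | finB =>
      by_cases h0 : k = lam - 1 <;>
        simp [trB, BSem, h0, hTop, hneg, toC2, CSat2] <;> omega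

lemma msat_body {lam : ℕ} {H T : ℕ → Set α} {τ : ℕ → ℕ} {k : ℕ}
    (bp bn : List (BAtom α)) :
    MSat lam H T τ k
      (.and (mconj (bp.map bToM)) (mconj (bn.map (fun b => mneg (bToM b))))) ↔
    ((∀ b ∈ bp, BSem (H k) lam k b) ∧
      ∀ b ∈ bn, ¬ BSem (H k) lam k b ∧ ¬ BSem (T k) lam k b) := by
  show (MSat lam H T τ k _ ∧ MSat lam H T τ k _) ↔ _
  rw [msat_conj, msat_conj]
  simp only [List.forall_mem_map]
  constructor
  · rintro ⟨h1, h2⟩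
    refine ⟨fun b hb => (msat_bToM b).mp (h1 b hb), fun b hb => ?_⟩
    have := h2 b hb
    rw [show MSat lam H T τ k (mneg (bToM b)) =
      ((MSat lam H T τ k (bToM b) → False) ∧ (MSat lam T T τ k (bToM b) → False)) from rfl]
      at this
    exact ⟨fun hc => this.1 ((msat_bToM b).mpr hc), fun hc => this.2 ((msat_bToM b).mpr hc)⟩
  · rintro ⟨h1, h2⟩
    refine ⟨fun b hb => (msat_bToM b).mpr (h1 b hb), fun b hb => ?_⟩
    exact ⟨fun hc => (h2 b hb).1 ((msat_bToM b).mp hc),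
           fun hc => (h2 b hb).2 ((msat_bToM b).mp hc)⟩

lemma csat_body {lam k : ℕ} (hk : k < lam) (h t : CVal2 α)
    (bp bn : List (BAtom α)) :
    CSat2 h t (toC2 (.and (hconj (bp.map (trB id lam k)))
        (hconj (bn.map (fun b => hneg (trB id lam k b)))))) ↔
    ((∀ b ∈ bp, BSem (Hof h k) lam k b) ∧
      ∀ b ∈ bn, ¬ BSem (Hof h k) lam k b ∧ ¬ BSem (Hof t k) lam k b) := by
  show (CSat2 h t _ ∧ CSat2 h t _) ↔ _
  rw [csat_conj, csat_conj]
  simp only [List.forall_mem_map]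
  constructor
  · rintro ⟨h1, h2⟩
    refine ⟨fun b hb => (csat_trB hk h t b).mp (h1 b hb), fun b hb => ?_⟩
    have := h2 b hb
    rw [show CSat2 h t (toC2 (hneg (trB id lam k b))) =
      ((CSat2 h t (toC2 (trB id lam k b)) → False) ∧
       (CSat2 t t (toC2 (trB id lam k b)) → False)) from rfl] at this
    exact ⟨fun hc => this.1 ((csat_trB hk h t b).mpr hc),
           fun hc => this.2 ((csat_trB hk t t b).mpr hc)⟩
  · rintro ⟨h1, h2⟩
    refine ⟨fun b hb => (csat_trB hk h t b).mpr (h1 b hb), fun b hb => ?_⟩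
    exact ⟨fun hc => (h2 b hb).1 ((csat_trB hk h t b).mp hc),
           fun hc => (h2 b hb).2 ((csat_trB hk t t b).mp hc)⟩

lemma msat_head {lam : ℕ} {H T : ℕ → Set α} {τ : ℕ → ℕ} {k : ℕ} (hp hn : List α) :
    MSat lam H T τ k
      (mdisj (hp.map MForm.atom ++ hn.map (fun a => mneg (MForm.atom a)))) ↔
    ((∃ a ∈ hp, a ∈ H k) ∨ ∃ a ∈ hn, a ∉ H k ∧ a ∉ T k) := by
  rw [msat_disj]
  constructor
  · rintro ⟨φ, hφ, hs⟩
    rcases List.mem_append.mp hφ with hm | hm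
    · obtain ⟨a, ha, rfl⟩ := List.mem_map.mp hm
      exact Or.inl ⟨a, ha, hs⟩
    · obtain ⟨a, ha, rfl⟩ := List.mem_map.mp hm
      exact Or.inr ⟨a, ha, fun hc => hs.1 hc, fun hc => hs.2 hc⟩
  · rintro (⟨a, ha, hs⟩ | ⟨a, ha, h1, h2⟩)
    · exact ⟨MForm.atom a, List.mem_append.mpr (Or.inl (List.mem_map_of_mem (f := MForm.atom) ha)), hs⟩
    · exact ⟨mneg (MForm.atom a),
        List.mem_append.mpr (Or.inr (List.mem_map_of_mem (f := fun a => mneg (MForm.atom a)) ha)),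
        fun hc => h1 hc, fun hc => h2 hc⟩

lemma csat_head {k : ℕ} (h t : CVal2 α) (hp hn : List α) :
    CSat2 h t (toC2 (hdisj (hp.map (fun a => HTForm.atom ((a, k) : α × ℕ)) ++
        hn.map (fun a => hneg (HTForm.atom ((a, k) : α × ℕ)))))) ↔
    ((∃ a ∈ hp, a ∈ Hof h k) ∨ ∃ a ∈ hn, a ∉ Hof h k ∧ a ∉ Hof t k) := by
  rw [csat_disj]
  constructor
  · rintro ⟨φ, hφ, hs⟩
    rcases List.mem_append.mp hφ with hm | hm
    · obtain ⟨a, ha, rfl⟩ := List.mem_map.mp hm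
      exact Or.inl ⟨a, ha, hs⟩
    · obtain ⟨a, ha, rfl⟩ := List.mem_map.mp hm
      exact Or.inr ⟨a, ha, fun hc => hs.1 hc, fun hc => hs.2 hc⟩
  · rintro (⟨a, ha, hs⟩ | ⟨a, ha, h1, h2⟩)
    · exact ⟨HTForm.atom (a, k), List.mem_append.mpr (Or.inl (List.mem_map_of_mem (f := fun a => HTForm.atom ((a, k) : α × ℕ)) ha)), hs⟩
    · exact ⟨hneg (HTForm.atom (a, k)),
        List.mem_append.mpr (Or.inr (List.mem_map_of_mem (f := fun a => hneg (HTForm.atom ((a, k) : α × ℕ))) ha)),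
        fun hc => h1 hc, fun hc => h2 hc⟩

lemma csat2_persist {h t : CVal2 α} (hle : CVal2Le h t) :
    ∀ φ, CSat2 h t φ → CSat2 t t φ := by
  intro φ
  induction φ with
  | bot => exact id
  | batom p => exact fun hp => hle.1 hp
  | eqC x d => exact fun hp => hle.2 x d hp
  | diff x y d => rintro ⟨a, b, ha, hb, hd⟩; exact ⟨a, b, hle.2 x a ha, hle.2 y b hb, hd⟩
  | and φ ψ ih1 ih2 => rintro ⟨h1, h2⟩; exact ⟨ih1 h1, ih2 h2⟩
  | or φ ψ ih1 ih2 => rintro (h1 | h2); exacts [Or.inl (ih1 h1), Or.inr (ih2 h2)]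
  | imp φ ψ ih1 ih2 => rintro ⟨_, h2⟩; exact ⟨h2, h2⟩

end Aux

/-- Theorem 4 (Correctness of the constraint translation). -/
theorem constraint_translation_correct {α : Type} (lam : ℕ) (P : Set (MRule α))
    (t : CVal2 α)
    (he : CEqModel t (PiC lam P ∪ DeltaC2 lam ∪ PsiC lam P)) :
    ∃ τ : ℕ → ℕ, TimingFn lam τ ∧ (∀ k, k < lam → t.2 k = some (τ k)) ∧
      MetricEq lam (fun k => {a | (a, k) ∈ t.1}) τ P := by
  classical
  obtain ⟨hmod, hmin⟩ := he
  set Γ : Set (CForm2 α) := PiC lam P ∪ DeltaC2 lam ∪ PsiC lam P with hΓ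
  have hPi : ∀ r ∈ P, ∀ k, k < lam → toC2 (trRule id lam k r) ∈ Γ := by
    intro r hr k hk
    exact Set.mem_union_left _ (Set.mem_union_left _
      ⟨trRule id lam k r, ⟨r, hr, k, hk, rfl⟩, rfl⟩)
  have hDe : ∀ φ ∈ DeltaC2 (α := α) lam, φ ∈ Γ :=
    fun φ hφ => Set.mem_union_left _ (Set.mem_union_right _ hφ)
  have hPs : ∀ φ ∈ PsiC lam P, φ ∈ Γ := fun φ hφ => Set.mem_union_right _ hφ
  have h00 : lam ≠ 0 → t.2 0 = some 0 := fun _ => hmod _ (hDe _ (Or.inl rfl))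
  have hdiff : ∀ k, k + 1 < lam →
      ∃ x y : ℕ, t.2 k = some x ∧ t.2 (k + 1) = some y ∧ (x : ℤ) - y ≤ -1 := by
    intro k hk
    exact hmod _ (hDe _ (Or.inr ⟨k, hk, rfl⟩))
  set τ : ℕ → ℕ := fun k => if k < lam then (t.2 k).getD 0 else 0 with hτ
  have ht2 : ∀ k, k < lam → t.2 k = some (τ k) := by
    intro k hk
    have : ∃ v, t.2 k = some v := by
      cases k with
      | zero => exact ⟨0, h00 (by omega)⟩
      | succ j =>
          obtain ⟨x, y, _, hy, _⟩ := hdiff j hk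
          exact ⟨y, hy⟩
    obtain ⟨v, hv⟩ := this
    simp [hτ, hk, hv]
  have hTF : TimingFn lam τ := by
    constructor
    · by_cases h0 : 0 < lam
      · have := ht2 0 h0
        rw [h00 (by omega)] at this
        exact (Option.some_inj.mp this).symm
      · simp [hτ, h0]
    · intro k hk
      obtain ⟨x, y, hx, hy, hxy⟩ := hdiff k hk
      rw [ht2 k (by omega)] at hx
      rw [ht2 (k + 1) hk] at hy
      have hx' := Option.some_inj.mp hx
      have hy' := Option.some_inj.mp hy
      omega
  refine ⟨τ, hTF, ht2, ?_, ?_⟩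
  · -- total model part
    intro r hr k hk
    cases r with
    | std hp hn bp bn =>
        have hc := hmod _ (hPi _ hr k hk)
        have key : MSat lam (fun k => {a | (a, k) ∈ t.1}) (fun k => {a | (a, k) ∈ t.1}) τ k
            (MRule.mbody (.std hp hn bp bn)) →
            MSat lam (fun k => {a | (a, k) ∈ t.1}) (fun k => {a | (a, k) ∈ t.1}) τ k
              (mdisj (hp.map MForm.atom ++ hn.map (fun a => mneg (MForm.atom a)))) := by
          intro hb
          have hb' : CSat2 t t (toC2 (trBody id lam k (.std hp hn bp bn))) :=
            (csat_body hk t t bp bn).mpr ((msat_body bp bn).mp hb)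
          have hh := hc.1 hb'
          exact (msat_head hp hn).mpr ((csat_head t t hp hn).mp hh)
        exact ⟨key, key⟩
    | nxt m n a bp bn =>
        have hc := hmod _ (hPi _ hr k hk)
        have key : MSat lam (fun k => {a | (a, k) ∈ t.1}) (fun k => {a | (a, k) ∈ t.1}) τ k
            (MRule.mbody (.nxt m n a bp bn)) →
            MSat lam (fun k => {a | (a, k) ∈ t.1}) (fun k => {a | (a, k) ∈ t.1}) τ k
              (.next m n (.atom a)) := by
          intro hb
          have hb' : CSat2 t t (toC2 (trBody id lam k (.nxt m n a bp bn))) :=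
            (csat_body hk t t bp bn).mpr ((msat_body bp bn).mp hb)
          have hhead := hc.1 hb'
          by_cases hkl : k = lam - 1
          · rw [if_pos hkl] at hhead
            exact hhead.elim
          · have hk1 : k + 1 < lam := by omega
            rw [if_neg hkl] at hhead
            have hc1 := hmod _ (hPs _ ⟨m, n, a, bp, bn, hr, k, hk1, Or.inl rfl⟩)
            have hdlow : CSat2 t t (CForm2.diff k (k + 1) (-(m : ℤ))) := by
              by_contra hno
              exact hc1.1 ⟨hb', fun h => hno h, fun h => hno h⟩
            obtain ⟨x, y, hx, hy, hxy⟩ := hdlow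
            rw [ht2 k hk] at hx
            rw [ht2 (k + 1) hk1] at hy
            have hx' := Option.some_inj.mp hx
            have hy' := Option.some_inj.mp hy
            refine ⟨hk1, hhead, ⟨by omega, ?_⟩⟩
            intro n' hn'
            have hc2 := hmod _ (hPs _ ⟨m, n, a, bp, bn, hr, k, hk1, Or.inr ⟨n', hn', rfl⟩⟩)
            have hdhigh : CSat2 t t (CForm2.diff (k + 1) k ((n' : ℤ) - 1)) := by
              by_contra hno
              exact hc2.1 ⟨hb', fun h => hno h, fun h => hno h⟩
            obtain ⟨x2, y2, hx2, hy2, hxy2⟩ := hdhigh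
            rw [ht2 (k + 1) hk1] at hx2
            rw [ht2 k hk] at hy2
            have hx2' := Option.some_inj.mp hx2
            have hy2' := Option.some_inj.mp hy2
            omega
        exact ⟨key, key⟩
  · -- minimality part
    intro H hsub hM k hk
    set h : CVal2 α := (⟨{p : α × ℕ | p.2 < lam ∧ p.1 ∈ H p.2}, t.2⟩ : CVal2 α) with hh
    have hHof : ∀ j, j < lam → Hof h j = H j := by
      intro j hj
      ext a
      simp [Hof, hh, hj]
    have hle : CVal2Le h t := by
      constructor
      · rintro ⟨a, j⟩ ⟨hj, ha⟩
        exact hsub j ha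
      · intro x d hd
        exact hd
    have hmodel : CModel2 h t Γ := by
      intro φ hφ
      rcases hφ with (hφ | hφ) | hφ
      · -- PiC
        obtain ⟨ψ, ⟨r, hr, k', hk', rfl⟩, rfl⟩ := hφ
        have hTc := hmod _ (hPi _ hr k' hk')
        cases r with
        | std hp hn bp bn =>
            refine ⟨?_, hTc.2⟩
            intro hb
            have hb' : MSat lam H (fun j => {a | (a, j) ∈ t.1}) τ k'
                (MRule.mbody (.std hp hn bp bn)) := by
              apply (msat_body bp bn).mpr
              have hchar := (csat_body hk' h t bp bn).mp hb
              rw [hHof k' hk'] at hchar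
              exact hchar
            have hhd := (hM _ hr k' hk').1 hb'
            have hchar := (msat_head (H := H)
              (T := fun j => {a | (a, j) ∈ t.1}) hp hn).mp hhd
            apply (csat_head h t hp hn).mpr
            rw [hHof k' hk']
            exact hchar
        | nxt m n a bp bn =>
            refine ⟨?_, hTc.2⟩
            intro hb
            have hb' : MSat lam H (fun j => {a | (a, j) ∈ t.1}) τ k'
                (MRule.mbody (.nxt m n a bp bn)) := by
              apply (msat_body bp bn).mpr
              have hchar := (csat_body hk' h t bp bn).mp hb
              rw [hHof k' hk'] at hchar
              exact hchar
            obtain ⟨hk1, hmem, _⟩ := (hM _ hr k' hk').1 hb'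
            have hkl : ¬ (k' = lam - 1) := by omega
            rw [if_neg hkl]
            exact ⟨hk1, hmem⟩
      · -- DeltaC2
        rcases hφ with hφ | ⟨j, hj, rfl⟩
        · rw [Set.mem_singleton_iff] at hφ
          subst hφ
          exact hmod _ (hDe _ (Or.inl rfl))
        · exact hmod _ (hDe _ (Or.inr ⟨j, hj, rfl⟩))
      · -- PsiC
        obtain ⟨m, n, a, bp, bn, hr, k', hk1, hor⟩ := hφ
        rcases hor with rfl | ⟨n', hn', rfl⟩
        · have ht := hmod _ (hPs _ ⟨m, n, a, bp, bn, hr, k', hk1, Or.inl rfl⟩)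
          exact ⟨fun hx => ht.1 (csat2_persist hle _ hx), ht.1⟩
        · have ht := hmod _ (hPs _ ⟨m, n, a, bp, bn, hr, k', hk1, Or.inr ⟨n', hn', rfl⟩⟩)
          exact ⟨fun hx => ht.1 (csat2_persist hle _ hx), ht.1⟩
    have heq := hmin h hle hmodel
    have h1 : h.1 = t.1 := congrArg Prod.fst heq
    apply Set.Subset.antisymm (hsub k)
    intro a ha
    have : (a, k) ∈ h.1 := h1 ▸ ha
    exact this.2
end

section
/- In HT_c, shifting a constraint atom from the negated body to the head preserves models on interpretations where all variables of the constraint are defined: if ⟨h,t⟩ is an HT_c-interpretation such that h(x) and h(y) are defined in ℕ (hence t(x), t(y) as well), then ⟨h,t⟩ ⊨ (⊥ ← B ∧ ¬c) if and only if ⟨h,t⟩ ⊨ (c ← B), where c is the difference constraint x − y ≤ d and B is any constraint formula. -/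
/-- Shifting a difference constraint from negated body to head preserves HT_c
satisfaction when its variables are defined. -/
theorem shift_constraint {V : Type} (h t : CVal V) (hle : CValLe h t)
    (x y : V) (d : ℤ) (a b : ℕ) (hx : h x = some a) (hy : h y = some b)
    (B : CForm V) :
    CSat h t (.imp (.and B (.imp (.diff x y d) .bot)) .bot) ↔
      CSat h t (.imp B (.diff x y d)) := by
  have tx : t x = some a := hle x a hx
  have ty : t y = some b := hle y b hy
  have hc : CSat h t (.diff x y d) ↔ (a : ℤ) - b ≤ d := by
    constructor
    · rintro ⟨a', b', ha', hb', hab⟩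
      rw [hx] at ha'; rw [hy] at hb'
      injection ha' with ha'; injection hb' with hb'; omega
    · intro hd; exact ⟨a, b, hx, hy, hd⟩
  have tc : CSat t t (.diff x y d) ↔ (a : ℤ) - b ≤ d := by
    constructor
    · rintro ⟨a', b', ha', hb', hab⟩
      rw [tx] at ha'; rw [ty] at hb'
      injection ha' with ha'; injection hb' with hb'; omega
    · intro hd; exact ⟨a, b, tx, ty, hd⟩
  show ((CSat h t B ∧ ((CSat h t (.diff x y d) → False) ∧ (CSat t t (.diff x y d) → False))) → False) ∧
        ((CSat t t B ∧ ((CSat t t (.diff x y d) → False) ∧ (CSat t t (.diff x y d) → False))) → False) ↔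
      (CSat h t B → CSat h t (.diff x y d)) ∧ (CSat t t B → CSat t t (.diff x y d))
  rw [hc, tc]
  by_cases hd : (a : ℤ) - b ≤ d <;> simp [hd]
end

section
/- The size of the Boolean timing theory Δ_{λ,ν} ∪ Ψ_{λ,ν}(P), measured as the number of rules, is at most |P|·λ·(ν+1)² + λ·(ν+1) + 1 (i.e., O(λ·ν²) for fixed P), while the constraint theory Δ^c_λ ∪ Ψ^c_λ(P) has at most 2·|P|·λ + λ rules (i.e., O(λ) for fixed P). -/
lemma ncard_le_of_covered {γ δ : Type*} (s : Set δ) (A : Finset γ) (F : γ → δ)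
    (h : ∀ x ∈ s, ∃ a ∈ A, x = F a) : s.Finite ∧ s.ncard ≤ A.card := by
  classical
  have hsub : s ⊆ ↑(A.image F) := by
    intro x hx
    obtain ⟨a, ha, rfl⟩ := h x hx
    simpa using Finset.mem_image_of_mem F ha
  have hfin : s.Finite := Set.Finite.subset (A.image F).finite_toSet hsub
  refine ⟨hfin, ?_⟩
  calc s.ncard ≤ (↑(A.image F) : Set δ).ncard :=
        Set.ncard_le_ncard hsub (A.image F).finite_toSet
    _ = (A.image F).card := Set.ncard_coe_finset _
    _ ≤ A.card := Finset.card_image_le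

/-- Size bounds: the Boolean timing theory has `O(λ·ν²)` rules while the constraint
theory has `O(λ)` rules. -/
theorem theory_size_bounds {α : Type} (lam ν : ℕ) (hlam : 1 ≤ lam)
    (P : Finset (MRule α)) :
    (DeltaB (β := TAtom α) Sum.inr lam ν ∪ PsiB lam ν (↑P : Set (MRule α))).ncard ≤
        P.card * lam * (ν + 1) ^ 2 + lam * (ν + 1) + 1 ∧
    (DeltaC2 (α := α) lam ∪ PsiC lam (↑P : Set (MRule α))).ncard ≤
        2 * P.card * lam + lam := by
  classical
  -- pieces of DeltaB
  set S1 : Set (HTForm (TAtom α)) := {HTForm.atom (Sum.inr (0, 0))} with hS1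
  set S2 : Set (HTForm (TAtom α)) :=
    {r | ∃ k d, k + 1 < lam ∧ d ≤ ν ∧ r = deltaRule (β := TAtom α) Sum.inr k d ν} with hS2
  have h1 : S1.Finite ∧ S1.ncard ≤ ({0} : Finset ℕ).card := by
    apply ncard_le_of_covered S1 {0} (fun _ => HTForm.atom (Sum.inr (0, 0)))
    rintro x rfl; exact ⟨0, by simp⟩
  have h2 : S2.Finite ∧ S2.ncard ≤ (Finset.range lam ×ˢ Finset.range (ν + 1)).card := by
    apply ncard_le_of_covered S2 _ (fun p => deltaRule (β := TAtom α) Sum.inr p.1 p.2 ν)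
    rintro x ⟨k, d, hk, hd, rfl⟩
    exact ⟨(k, d), by simp [Finset.mem_product]; omega, rfl⟩
  have h3 : (PsiB lam ν (↑P : Set (MRule α))).Finite ∧
      (PsiB lam ν (↑P : Set (MRule α))).ncard ≤
        (P ×ˢ Finset.range lam ×ˢ Finset.range (ν + 1) ×ˢ Finset.range (ν + 1)).card := by
    apply ncard_le_of_covered _ _
      (fun q : MRule α × ℕ × ℕ × ℕ =>
        match q.1 with
        | .nxt m n a bp bn =>
            HTForm.imp (.and (trBody Sum.inl lam q.2.1 (.nxt m n a bp bn))
              (.and (.atom (Sum.inr (q.2.1, q.2.2.1)))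
                    (.atom (Sum.inr (q.2.1 + 1, q.2.2.2))))) .bot
        | _ => .bot)
    rintro x ⟨m, n, a, bp, bn, hmem, k, d, d', hk, hdd, hd', rfl, -⟩
    refine ⟨(MRule.nxt m n a bp bn, k, d, d'), ?_, rfl⟩
    simp [Finset.mem_product]
    exact ⟨hmem, by omega, by omega, by omega⟩
  -- pieces of DeltaC2 / PsiC
  set C1 : Set (CForm2 α) := {CForm2.eqC 0 0} with hC1
  set C2 : Set (CForm2 α) := {r | ∃ k, k + 1 < lam ∧ r = CForm2.diff k (k + 1) (-1)} with hC2
  have hc1 : C1.Finite ∧ C1.ncard ≤ ({0} : Finset ℕ).card := by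
    apply ncard_le_of_covered C1 {0} (fun _ => CForm2.eqC 0 0)
    rintro x rfl; exact ⟨0, by simp⟩
  have hc2 : C2.Finite ∧ C2.ncard ≤ (Finset.range (lam - 1)).card := by
    apply ncard_le_of_covered C2 _ (fun k => CForm2.diff k (k + 1) (-1))
    rintro x ⟨k, hk, rfl⟩
    exact ⟨k, by simp; omega, rfl⟩
  have hc3 : (PsiC lam (↑P : Set (MRule α))).Finite ∧
      (PsiC lam (↑P : Set (MRule α))).ncard ≤
        (P ×ˢ Finset.range lam ×ˢ ({false, true} : Finset Bool)).card := by
    apply ncard_le_of_covered _ _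
      (fun q : MRule α × ℕ × Bool =>
        match q.1 with
        | .nxt m n a bp bn =>
            if q.2.2 then
              match n with
              | some n' =>
                  CForm2.imp (.and (toC2 (trBody id lam q.2.1 (.nxt m n a bp bn)))
                    (cneg (.diff (q.2.1 + 1) q.2.1 ((n' : ℤ) - 1)))) .bot
              | none => .bot
            else
              CForm2.imp (.and (toC2 (trBody id lam q.2.1 (.nxt m n a bp bn)))
                (cneg (.diff q.2.1 (q.2.1 + 1) (-(m : ℤ))))) .bot
        | _ => .bot)
    rintro x ⟨m, n, a, bp, bn, hmem, k, hk, hx⟩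
    rcases hx with rfl | ⟨n', rfl, rfl⟩
    · exact ⟨(MRule.nxt m n a bp bn, k, false),
        by simp [Finset.mem_product]; exact ⟨hmem, by omega⟩, rfl⟩
    · exact ⟨(MRule.nxt m (some n') a bp bn, k, true),
        by simp [Finset.mem_product]; exact ⟨hmem, by omega⟩, rfl⟩
  constructor
  · have hub : DeltaB (β := TAtom α) Sum.inr lam ν = S1 ∪ S2 := rfl
    rw [hub]
    calc ((S1 ∪ S2) ∪ PsiB lam ν (↑P : Set (MRule α))).ncard
        ≤ (S1 ∪ S2).ncard + (PsiB lam ν (↑P : Set (MRule α))).ncard :=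
          Set.ncard_union_le _ _
      _ ≤ (S1.ncard + S2.ncard) + (PsiB lam ν (↑P : Set (MRule α))).ncard := by
          have := Set.ncard_union_le S1 S2; omega
      _ ≤ (1 + lam * (ν + 1)) + P.card * (lam * ((ν + 1) * (ν + 1))) := by
          have := h1.2; have := h2.2; have := h3.2
          simp [Finset.card_product] at *
          have : S1.ncard = 1 := Set.ncard_singleton _
          omega
      _ ≤ P.card * lam * (ν + 1) ^ 2 + lam * (ν + 1) + 1 := by ring_nf; omega
  · have hub : DeltaC2 (α := α) lam = C1 ∪ C2 := rfl
    rw [hub]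
    calc ((C1 ∪ C2) ∪ PsiC lam (↑P : Set (MRule α))).ncard
        ≤ (C1 ∪ C2).ncard + (PsiC lam (↑P : Set (MRule α))).ncard :=
          Set.ncard_union_le _ _
      _ ≤ (C1.ncard + C2.ncard) + (PsiC lam (↑P : Set (MRule α))).ncard := by
          have := Set.ncard_union_le C1 C2; omega
      _ ≤ (1 + (lam - 1)) + P.card * (lam * 2) := by
          have := hc1.2; have := hc2.2; have := hc3.2
          simp [Finset.card_product] at *
          have : C1.ncard = 1 := Set.ncard_singleton _
          omega
      _ ≤ 2 * P.card * lam + lam := by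
          have : 1 + (lam - 1) = lam := by omega
          rw [this]; ring_nf; omega
end
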